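/- Let A = ⊕ A^{p,q} be the bigraded complex of an almost Hermitian manifold with inner products on each A^{p,q}, with operators μ̄, ∂̄, ∂ satisfying μ̄² = 0, ∂̄μ̄ + μ̄∂̄ = 0, ∂̄² + μ̄∂ + ∂μ̄ = 0, and with adjoints μ̄*, ∂̄*. Then every ∂̄-μ̄-harmonic form (i.e., ω with μ̄ω = μ̄*ω = ∂̄ω = ∂̄*ω = 0) defines a nonzero class in Dolbeault cohomology unless ω = 0; i.e., the natural map H_{∂̄}^{p,q} ∩ H_{μ̄}^{p,q} → H_{Dol}^{p,q} is injective. -/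

import Mathlib

/-- Harmonic Inclusion: on an almost Hermitian manifold, every `∂̄`-`μ̄`-harmonic
`(p,q)`-form (i.e. `ω` with `μ̄ω = μ̄*ω = ∂̄ω = ∂̄*ω = 0`) defines a nonzero Dolbeault
cohomology class unless `ω = 0`: if `ω = μ̄α + ∂̄β` with `μ̄β = 0`, then `ω = 0`. -/
theorem stmt_8 {V : Type*} [NormedAddCommGroup V] [InnerProductSpace ℂ V]
    (A : ℤ × ℤ → Submodule ℂ V)
    (mub delb del mubs delbs : V →ₗ[ℂ] V)
    (hmubmap : ∀ p q : ℤ, (A (p, q)).map mub ≤ A (p - 1, q + 2))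
    (hdelbmap : ∀ p q : ℤ, (A (p, q)).map delb ≤ A (p, q + 1))
    (hdelmap : ∀ p q : ℤ, (A (p, q)).map del ≤ A (p + 1, q))
    (hadj_mub : ∀ x y : V, (inner ℂ (mub x) y : ℂ) = inner ℂ x (mubs y))
    (hadj_delb : ∀ x y : V, (inner ℂ (delb x) y : ℂ) = inner ℂ x (delbs y))
    (h1 : mub ∘ₗ mub = 0)
    (h2 : delb ∘ₗ mub + mub ∘ₗ delb = 0)
    (h3 : delb ∘ₗ delb + mub ∘ₗ del + del ∘ₗ mub = 0)
    (p q : ℤ) :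
    ∀ ω ∈ A (p, q), mub ω = 0 → mubs ω = 0 → delb ω = 0 → delbs ω = 0 →
      ∀ α ∈ A (p + 1, q - 2), ∀ β ∈ A (p, q - 1),
        mub β = 0 → ω = mub α + delb β → ω = 0 := by
  intro ω hω hm hms hd hds α hα β hβ hmb heq
  have h : (inner ℂ ω ω : ℂ) = 0 := by
    nth_rewrite 1 [heq]
    rw [inner_add_left, hadj_mub, hadj_delb, hms, hds, inner_zero_right, inner_zero_right,
      add_zero]
  exact inner_self_eq_zero.mp h
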